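/- For all integers d, k ≥ 2: the Natarajan dimension of the One-vs-All class with halfspaces satisfies d_N(W^d_OvA) ≥ d·(k−1); moreover there is a universal constant C > 0 such that for every binary hypothesis class H of VC dimension at most d, the graph dimension of the One-vs-All class H_OvA satisfies d_G(H_OvA) ≤ C·d·k·log(d·k). -/

import Mathlib

open MeasureTheory
open scoped ENNReal

noncomputable def argmaxFin {k : ℕ} [NeZero k] (f : Fin k → ℝ) : Fin k :=
  (Finset.univ.filter fun i => ∀ j, f j ≤ f i).min' (by
    obtain ⟨i, -, hi⟩ := Finset.exists_max_image (Finset.univ : Finset (Fin k)) f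
      ⟨⟨0, Nat.pos_of_ne_zero (NeZero.ne k)⟩, Finset.mem_univ _⟩
    exact ⟨i, Finset.mem_filter.mpr ⟨Finset.mem_univ _, fun j => hi j (Finset.mem_univ _)⟩⟩)

def aug {d : ℕ} (x : Fin d → ℝ) : Fin (d + 1) → ℝ := Fin.snoc x 1

/-- halfspaces over ℝ^d, `true` ↔ +1, sign(0) = 1 -/
def halfspace (d : ℕ) : Set ((Fin d → ℝ) → Bool) :=
  { h | ∃ w : Fin (d + 1) → ℝ, h = fun x => decide (0 ≤ ∑ i, w i * aug x i) }

noncomputable def msvm (d k : ℕ) [NeZero k] : Set ((Fin d → ℝ) → Fin k) :=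
  { h | ∃ W : Fin k → Fin (d + 1) → ℝ,
      h = fun x => argmaxFin (fun i => ∑ j, W i j * aug x j) }

def NShatters {X Y : Type*} (H : Set (X → Y)) (S : Set X) : Prop :=
  ∃ f₁ f₂ : X → Y, (∀ x ∈ S, f₁ x ≠ f₂ x) ∧
    ∀ T ⊆ S, ∃ g ∈ H, (∀ x ∈ T, g x = f₁ x) ∧ ∀ x ∈ S \ T, g x = f₂ x

def GShatters {X Y : Type*} (H : Set (X → Y)) (S : Set X) : Prop :=
  ∃ f : X → Y, ∀ T ⊆ S, ∃ g ∈ H, (∀ x ∈ T, g x = f x) ∧ ∀ x ∈ S \ T, g x ≠ f x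

def VCDimLE {X : Type*} (H : Set (X → Bool)) (d : ℕ) : Prop :=
  ∀ S : Finset X, (∀ b : X → Bool, ∃ h ∈ H, ∀ x ∈ S, h x = b x) → S.card ≤ d

inductive LTree (k : ℕ) : Type where
  | leaf : Fin k → LTree k
  | node : LTree k → LTree k → LTree k

def LTree.labels {k : ℕ} : LTree k → List (Fin k)
  | .leaf i => [i]
  | .node l r => l.labels ++ r.labels

/-- `T` is a tree for `k` classes: its leaf labels form a bijection with `[k]`. -/
def LTree.IsTreeFor {k : ℕ} (T : LTree k) : Prop := T.labels.Perm (List.finRange k)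

def treeClass {X : Type*} {k : ℕ} (H : Set (X → Bool)) : LTree k → Set (X → Fin k)
  | .leaf i => {fun _ => i}
  | .node l r => { f | ∃ c ∈ H, ∃ fl ∈ treeClass H l, ∃ fr ∈ treeClass H r,
      f = fun x => if c x then fr x else fl x }

def treesClass {X : Type*} (H : Set (X → Bool)) (k : ℕ) : Set (X → Fin k) :=
  ⋃ T ∈ { T : LTree k | T.IsTreeFor }, treeClass H T

noncomputable def decode {k : ℕ} [NeZero k] {J : Type*} [Fintype J]
    (M : Fin k → J → ℝ) (u : J → Bool) : Fin k :=
  argmaxFin (fun i => ∑ j, M i j * (if u j then (1 : ℝ) else -1))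

noncomputable def ecocClass {X : Type*} {k : ℕ} [NeZero k] {J : Type*} [Fintype J]
    (H : Set (X → Bool)) (M : Fin k → J → ℝ) : Set (X → Fin k) :=
  { g | ∃ h : J → X → Bool, (∀ j, h j ∈ H) ∧ g = fun x => decode M (fun j => h j x) }

def ovaCode (k : ℕ) : Fin k → Fin k → ℝ := fun i j => if i = j then 1 else -1

def apCode (k : ℕ) : Fin k → { p : Fin k × Fin k // p.1 < p.2 } → ℝ :=
  fun i p => if i = p.1.1 then -1 else if i = p.1.2 then 1 else 0

noncomputable def errStar {X : Type*} [MeasurableSpace X] {k : ℕ}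
    (D : Measure (X × Fin k)) (H : Set (X → Fin k)) : ℝ≥0∞ :=
  ⨅ h ∈ H, D { p | h p.1 ≠ p.2 }

noncomputable def errStarBin {X : Type*} [MeasurableSpace X]
    (Q : Measure (X × Bool)) (H : Set (X → Bool)) : ℝ≥0∞ :=
  ⨅ h ∈ H, Q { p | h p.1 ≠ p.2 }

inductive PTree : Type where
  | leaf : PTree
  | node : PTree → PTree → PTree

def PTree.nLeaves : PTree → ℕ
  | .leaf => 1
  | .node l r => l.nLeaves + r.nLeaves

def PTree.leftLeaves : PTree → ℕ
  | .leaf => 0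
  | .node l _ => l.nLeaves

def PTree.rightLeaves : PTree → ℕ
  | .leaf => 0
  | .node _ r => r.nLeaves

def PTree.labelAux {k : ℕ} (f : ℕ → Fin k) : PTree → ℕ → LTree k
  | .leaf, n => .leaf (f n)
  | .node l r, n => .node (PTree.labelAux f l n) (PTree.labelAux f r (n + l.nLeaves))

lemma argmaxFin_eq {k : ℕ} [NeZero k] (f : Fin k → ℝ) (i : Fin k)
    (hmax : ∀ j, f j ≤ f i) (hmin : ∀ j, (∀ l, f l ≤ f j) → i ≤ j) :
    argmaxFin f = i := by
  unfold argmaxFin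
  apply le_antisymm
  · exact Finset.min'_le _ _ (Finset.mem_filter.mpr ⟨Finset.mem_univ _, hmax⟩)
  · apply Finset.le_min'
    intro y hy
    exact hmin y (Finset.mem_filter.mp hy).2

lemma ova_score {k : ℕ} [NeZero k] (u : Fin k → Bool) (i : Fin k) :
    (∑ j, ovaCode k i j * (if u j then (1:ℝ) else -1))
      = 2 * (if u i then (1:ℝ) else -1) - ∑ j, (if u j then (1:ℝ) else -1) := by
  have h : ∀ j : Fin k, ovaCode k i j * (if u j then (1:ℝ) else -1)
      = (if i = j then 2 * (if u j then (1:ℝ) else -1) else 0) - (if u j then (1:ℝ) else -1) := by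
    intro j
    by_cases hj : i = j <;> by_cases hu : u j <;> simp [ovaCode, hj, hu] <;> ring
  rw [Finset.sum_congr rfl fun j _ => h j, Finset.sum_sub_distrib, Finset.sum_ite_eq]
  simp

lemma decode_ova_eq {k : ℕ} [NeZero k] (u : Fin k → Bool) (i : Fin k)
    (hi : u i = true) (hlt : ∀ j, j < i → u j = false) :
    decode (ovaCode k) u = i := by
  unfold decode
  apply argmaxFin_eq
  · intro j
    rw [ova_score, ova_score, hi]
    simp only [if_pos rfl]
    split_ifs <;> linarith
  · intro j hj
    have h2 := hj i
    rw [ova_score, ova_score, hi] at h2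
    norm_num at h2
    have huj : u j = true := by
      by_contra h
      simp only [Bool.not_eq_true] at h
      rw [h] at h2
      norm_num at h2
    by_contra hle
    push_neg at hle
    rw [hlt j hle] at huj
    exact Bool.noConfusion huj

lemma decode_ova_zero {k : ℕ} [NeZero k] (u : Fin k → Bool)
    (h : ∀ j, u j = false) :
    decode (ovaCode k) u = 0 := by
  unfold decode
  apply argmaxFin_eq
  · intro j; rw [ova_score, ova_score, h j, h 0]
  · intro j _
    exact Fin.zero_le j

noncomputable def ptc (d : ℕ) (i : Fin d) (c : ℕ) : Fin d → ℝ := fun j =>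
  if j.val = 0 then (4 * c + if i.val = 1 then 1 else 0 : ℝ)
  else if j.val = 1 then -(4 * c + if i.val = 1 then 1 else 0 : ℝ)^2
  else if j = i then 1 else 0

noncomputable def wts (d c : ℕ) (s : ℕ → ℝ) : Fin (d+1) → ℝ := fun j =>
  if j.val = 0 then 9*(2*(4*(c:ℝ))+1) + s 1 - s 0
  else if j.val = 1 then 9
  else if j.val = d then -9*(4*(c:ℝ))*((4*(c:ℝ))+1) - (s 1 - s 0)*(4*(c:ℝ)) + s 0
  else s j.val - s 0

lemma wts_value (d : ℕ) (hd : 2 ≤ d) (i : Fin d) (c c' : ℕ) (s : ℕ → ℝ) :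
    ∑ j, wts d c s j * aug (ptc d i c') j
      = -9*(4*(c':ℝ) + if i.val = 1 then 1 else 0)^2
        + (9*(2*(4*(c:ℝ))+1) + s 1 - s 0)*(4*(c':ℝ) + if i.val = 1 then 1 else 0)
        + (-9*(4*(c:ℝ))*((4*(c:ℝ))+1) - (s 1 - s 0)*(4*(c:ℝ)) + s 0)
        + (if 2 ≤ i.val then s i.val - s 0 else 0) := by
  set t' : ℝ := (4 * c' + if i.val = 1 then 1 else 0 : ℝ) with ht'
  rw [Fin.sum_univ_castSucc]
  simp only [aug, Fin.snoc_castSucc, Fin.snoc_last, mul_one]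
  have hlast : wts d c s (Fin.last d) = -9*(4*(c:ℝ))*((4*(c:ℝ))+1) - (s 1 - s 0)*(4*(c:ℝ)) + s 0 := by
    simp only [wts, Fin.val_last, if_neg (by omega : ¬ d = 0), if_neg (by omega : ¬ d = 1),
      if_pos rfl]
    norm_num
  have hpoint : ∀ j : Fin d, wts d c s j.castSucc * ptc d i c' j
      = (if j.val = 0 then (9*(2*(4*(c:ℝ))+1) + s 1 - s 0) * t' else 0)
      + (if j.val = 1 then 9 * (-t'^2) else 0)
      + (if j = i ∧ 2 ≤ i.val then (s i.val - s 0) else 0) := by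
    intro j
    by_cases h0 : j.val = 0
    · have hji : ¬ (j = i ∧ 2 ≤ i.val) := by
        rintro ⟨h, h2⟩; rw [← h] at h2; omega
      rw [if_pos h0, if_neg (by omega : ¬ j.val = 1), if_neg hji]
      simp only [wts, ptc, Fin.coe_castSucc, if_pos h0]
      ring
    · by_cases h1 : j.val = 1
      · have hji : ¬ (j = i ∧ 2 ≤ i.val) := by
          rintro ⟨h, h2⟩; rw [← h] at h2; omega
        rw [if_neg h0, if_pos h1, if_neg hji]
        simp only [wts, ptc, Fin.coe_castSucc, if_neg h0, if_pos h1]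
        ring
      · rw [if_neg h0, if_neg h1]
        have hwj : wts d c s j.castSucc = s j.val - s 0 := by
          simp only [wts, Fin.coe_castSucc, if_neg h0, if_neg h1,
            if_neg (by have := j.isLt; omega : ¬ j.val = d)]
        rw [hwj]
        simp only [ptc, if_neg h0, if_neg h1]
        by_cases hji : j = i
        · have h2i : 2 ≤ i.val := by rw [← hji]; omega
          rw [if_pos hji, if_pos ⟨hji, h2i⟩, ← hji]
          ring
        · rw [if_neg hji, if_neg (by rintro ⟨h,-⟩; exact hji h)]
          ring
  rw [Finset.sum_congr rfl (fun j _ => hpoint j)]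
  rw [Finset.sum_add_distrib, Finset.sum_add_distrib]
  have hS1 : (∑ j : Fin d, if j.val = 0 then (9*(2*(4*(c:ℝ))+1) + s 1 - s 0) * t' else 0)
      = (9*(2*(4*(c:ℝ))+1) + s 1 - s 0) * t' := by
    rw [Finset.sum_eq_single_of_mem (⟨0, by omega⟩ : Fin d) (Finset.mem_univ _)
      (fun b _ hb => if_neg (fun h => hb (Fin.ext h)))]
    exact if_pos rfl
  have hS2 : (∑ j : Fin d, if j.val = 1 then 9 * (-t'^2) else 0) = 9 * (-t'^2) := by
    rw [Finset.sum_eq_single_of_mem (⟨1, by omega⟩ : Fin d) (Finset.mem_univ _)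
      (fun b _ hb => if_neg (fun h => hb (Fin.ext h)))]
    exact if_pos rfl
  have hS3 : (∑ j : Fin d, if j = i ∧ 2 ≤ i.val then (s i.val - s 0) else 0)
      = if 2 ≤ i.val then s i.val - s 0 else 0 := by
    by_cases h2 : 2 ≤ i.val
    · simp only [h2, and_true, if_pos]
      rw [Finset.sum_ite_eq' Finset.univ]
      simp
    · simp [h2]
  rw [hS1, hS2, hS3, hlast]
  ring

lemma wts_value_on (d : ℕ) (hd : 2 ≤ d) (i : Fin d) (c : ℕ) (s : ℕ → ℝ) :
    ∑ j, wts d c s j * aug (ptc d i c) j = s i.val := by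
  rw [wts_value d hd i c c s]
  by_cases h1 : i.val = 1
  · rw [if_pos h1, if_neg (by omega : ¬ 2 ≤ i.val), h1]; ring
  · rw [if_neg h1]
    by_cases h2 : 2 ≤ i.val
    · rw [if_pos h2]; ring
    · have h0 : i.val = 0 := by omega
      rw [if_neg h2, h0]; ring

lemma wts_value_off (d : ℕ) (hd : 2 ≤ d) (i : Fin d) (c c' : ℕ) (hcc : c' ≠ c)
    (s : ℕ → ℝ) (hs : ∀ n, -1 ≤ s n ∧ s n ≤ 1) :
    ∑ j, wts d c s j * aug (ptc d i c') j < 0 := by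
  rw [wts_value d hd i c c' s]
  obtain ⟨hs00, hs01⟩ := hs 0
  obtain ⟨hs10, hs11⟩ := hs 1
  obtain ⟨hsi0, hsi1⟩ := hs i.val
  set δ : ℝ := (if i.val = 1 then (1:ℝ) else 0) with hδ
  have hδ0 : 0 ≤ δ := by rw [hδ]; split <;> norm_num
  have hδ1 : δ ≤ 1 := by rw [hδ]; split <;> norm_num
  set r : ℝ := (if 2 ≤ i.val then s i.val - s 0 else 0) with hr
  have hrlo : -2 ≤ r := by rw [hr]; split <;> [linarith; norm_num]
  have hrhi : r ≤ 2 := by rw [hr]; split <;> [linarith; norm_num]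
  have heq : -9*(4*(c':ℝ) + δ)^2 + (9*(2*(4*(c:ℝ))+1) + s 1 - s 0)*(4*(c':ℝ) + δ)
        + (-9*(4*(c:ℝ))*((4*(c:ℝ))+1) - (s 1 - s 0)*(4*(c:ℝ)) + s 0) + r
      = -9*(4*(c':ℝ) + δ - 4*c)^2 + 9*(4*(c':ℝ) + δ - 4*c)
        + (s 1 - s 0)*(4*(c':ℝ) + δ - 4*c) + s 0 + r := by ring
  rw [heq]
  set u : ℝ := 4*(c':ℝ) + δ - 4*c with hu
  rcases lt_or_gt_of_ne hcc with h | h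
  · have hcr : (c':ℝ) + 1 ≤ c := by exact_mod_cast Nat.succ_le_of_lt h
    have hu3 : u ≤ -3 := by rw [hu]; linarith
    have hmul : (s 1 - s 0) * u ≤ -2 * u := by
      have := mul_le_mul_of_nonneg_right (show (-2:ℝ) ≤ s 1 - s 0 by linarith)
        (show (0:ℝ) ≤ -u by linarith)
      nlinarith
    nlinarith [sq_nonneg (u + 3)]
  · have hcr : (c:ℝ) + 1 ≤ c' := by exact_mod_cast Nat.succ_le_of_lt h
    have hu4 : 4 ≤ u := by rw [hu]; linarith
    have hmul : (s 1 - s 0) * u ≤ 2 * u := by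
      have := mul_le_mul_of_nonneg_right (show s 1 - s 0 ≤ (2:ℝ) by linarith)
        (show (0:ℝ) ≤ u by linarith)
      linarith
    nlinarith [sq_nonneg (u - 4)]

lemma ptc_inj (d : ℕ) (hd : 2 ≤ d) {i i' : Fin d} {c c' : ℕ}
    (h : ptc d i c = ptc d i' c') : i = i' ∧ c = c' := by
  have h0 := congrFun h ⟨0, by omega⟩
  simp only [ptc] at h0
  rw [if_pos trivial, if_pos trivial] at h0
  have hkey : c = c' ∧ (i.val = 1 ↔ i'.val = 1) := by
    rcases eq_or_ne i.val 1 with e1 | e1 <;> rcases eq_or_ne i'.val 1 with e2 | e2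
    · rw [if_pos e1, if_pos e2] at h0
      have hc : (c:ℝ) = c' := by linarith
      exact ⟨by exact_mod_cast hc, by simp [e1, e2]⟩
    · rw [if_pos e1, if_neg e2] at h0
      have : (4*c+1 : ℕ) = 4*c' := by exact_mod_cast (by linarith : (4*(c:ℝ)+1) = 4*c')
      omega
    · rw [if_neg e1, if_pos e2] at h0
      have : (4*c : ℕ) = 4*c'+1 := by exact_mod_cast (by linarith : (4*(c:ℝ)) = 4*c'+1)
      omega
    · rw [if_neg e1, if_neg e2] at h0
      have hc : (c:ℝ) = c' := by linarith
      exact ⟨by exact_mod_cast hc, by simp [e1, e2]⟩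
  refine ⟨?_, hkey.1⟩
  by_contra hne
  rcases eq_or_ne i.val 1 with e1 | e1
  · exact hne (Fin.ext (by rw [e1, hkey.2.mp e1]))
  · have e2 : i'.val ≠ 1 := fun h' => e1 (hkey.2.mpr h')
    by_cases g1 : 2 ≤ i.val
    · have hi := congrFun h i
      rw [ptc, ptc] at hi
      simp only [if_neg (by omega : ¬ i.val = 0), if_neg e1, if_pos rfl, if_neg hne] at hi
      norm_num at hi
    · by_cases g2 : 2 ≤ i'.val
      · have hi := congrFun h i'
        rw [ptc, ptc] at hi
        simp only [if_neg (by omega : ¬ i'.val = 0), if_neg e2, if_pos rfl,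
          if_neg (fun hh => hne hh.symm : ¬ i' = i)] at hi
        norm_num at hi
      · exact hne (Fin.ext (by omega))

lemma sum_choose_le (m d : ℕ) : ∑ i ∈ Finset.range (d+1), m.choose i ≤ (m+1)^d := by
  induction d with
  | zero => simp
  | succ n ih =>
    rw [Finset.sum_range_succ]
    have h1 : m.choose (n+1) ≤ m * (m+1)^n :=
      calc m.choose (n+1) ≤ m^(n+1) := Nat.choose_le_pow _ _
      _ = m * m^n := by ring
      _ ≤ m * (m+1)^n := Nat.mul_le_mul_left m (Nat.pow_le_pow_left (by omega) n)
    calc (∑ i ∈ Finset.range (n+1), m.choose i) + m.choose (n+1)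
        ≤ (m+1)^n + m * (m+1)^n := Nat.add_le_add ih h1
      _ = (m+1)^(n+1) := by ring

lemma log_rec_bound (m a : ℕ) (ha : 4 ≤ a)
    (h : (m : ℝ) * Real.log 2 ≤ (a : ℝ) * Real.log (m + 1)) :
    (m : ℝ) ≤ 10 * a * Real.log a := by
  have ha1 : (1:ℝ) ≤ (a:ℝ) := by exact_mod_cast (by omega : 1 ≤ a)
  have ha4 : (4:ℝ) ≤ (a:ℝ) := by exact_mod_cast ha
  have hm0 : (0:ℝ) ≤ (m:ℝ) := Nat.cast_nonneg m
  have hm1 : (1:ℝ) ≤ (m:ℝ) + 1 := by linarith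
  have hlog2 : (0.5:ℝ) ≤ Real.log 2 := by
    have := Real.log_two_gt_d9; linarith
  have hlogm1 : (0:ℝ) ≤ Real.log ((m:ℝ) + 1) := Real.log_nonneg hm1
  -- m ≤ 2 a log (m+1)
  have key : (m:ℝ) ≤ 2 * a * Real.log ((m:ℝ) + 1) := by
    nlinarith [mul_le_mul_of_nonneg_left hlog2 hm0]
  -- log (m+1) ≤ 2 sqrt (m+1)
  have hsq : Real.log ((m:ℝ) + 1) ≤ 2 * Real.sqrt ((m:ℝ) + 1) := by
    have h1 : Real.log (Real.sqrt ((m:ℝ)+1)) ≤ Real.sqrt ((m:ℝ)+1) - 1 :=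
      Real.log_le_sub_one_of_pos (Real.sqrt_pos.mpr (by linarith))
    have h2 : Real.log (Real.sqrt ((m:ℝ)+1)) = Real.log ((m:ℝ)+1) / 2 :=
      Real.log_sqrt (by linarith)
    linarith
  -- m ≤ 32 a²
  have hm32 : (m:ℝ) ≤ 32 * (a:ℝ)^2 := by
    have h3 : (m:ℝ) ≤ 4 * a * Real.sqrt ((m:ℝ)+1) := by
      have := mul_le_mul_of_nonneg_left hsq (by positivity : (0:ℝ) ≤ 2 * (a:ℝ))
      nlinarith
    have hsqsq : (Real.sqrt ((m:ℝ)+1))^2 = (m:ℝ)+1 := Real.sq_sqrt (by linarith)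
    nlinarith [Real.sqrt_nonneg ((m:ℝ)+1), sq_nonneg ((m:ℝ) - 4*a*Real.sqrt ((m:ℝ)+1))]
  -- conclude
  have hloga : (0:ℝ) < Real.log a := Real.log_pos (by linarith)
  have hmono : Real.log ((m:ℝ)+1) ≤ Real.log (33 * (a:ℝ)^2) := by
    apply Real.log_le_log (by linarith)
    nlinarith
  have hsplit : Real.log (33 * (a:ℝ)^2) = Real.log 33 + 2 * Real.log a := by
    rw [Real.log_mul (by norm_num) (by positivity), Real.log_pow]
    push_cast; ring
  have h33 : Real.log 33 ≤ 3 * Real.log a := by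
    have : Real.log 33 ≤ Real.log ((a:ℝ)^3) := Real.log_le_log (by norm_num) (by nlinarith)
    rwa [Real.log_pow] at this
    
  calc (m:ℝ) ≤ 2 * a * Real.log ((m:ℝ)+1) := key
    _ ≤ 2 * a * (Real.log 33 + 2 * Real.log a) := by
        rw [← hsplit]; apply mul_le_mul_of_nonneg_left hmono (by positivity)
    _ ≤ 2 * a * (5 * Real.log a) := by
        apply mul_le_mul_of_nonneg_left _ (by positivity); linarith
    _ = 10 * a * Real.log a := by ring

lemma gshatter_count {X : Type*} (H : Set (X → Bool)) (d k : ℕ) [NeZero k]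
    (hvc : VCDimLE H d) (S : Finset X) (hG : GShatters (ecocClass H (ovaCode k)) ↑S) :
    2 ^ S.card ≤ ((S.card + 1) ^ d) ^ k := by
  classical
  obtain ⟨f, hf⟩ := hG
  set 𝒜 : Finset (Finset X) :=
    S.powerset.filter (fun u => ∃ h ∈ H, ∀ x ∈ S, (h x = true ↔ x ∈ u)) with h𝒜
  have hAcard : 𝒜.card ≤ (S.card + 1)^d := by
    refine le_trans 𝒜.card_le_card_shatterer ?_
    have hsub : 𝒜.shatterer ⊆ (Finset.range (d+1)).biUnion (fun i => S.powersetCard i) := by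
      intro t ht
      rw [Finset.mem_shatterer] at ht
      obtain ⟨u, hu, htu⟩ := ht.exists_superset
      have huS : u ⊆ S := Finset.mem_powerset.mp (Finset.mem_filter.mp hu).1
      have htS : t ⊆ S := htu.trans huS
      have htd : t.card ≤ d := by
        apply hvc t
        intro b
        obtain ⟨u', hu', hcap⟩ := ht (Finset.filter_subset (fun x => b x = true) t)
        obtain ⟨h, hh, hhu⟩ := (Finset.mem_filter.mp hu').2
        refine ⟨h, hh, fun x hx => ?_⟩
        have h1 : h x = true ↔ x ∈ u' := hhu x (htS hx)
        have h2 : x ∈ t ∩ u' ↔ x ∈ t ∧ b x = true := by rw [hcap]; simp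
        by_cases hb : b x = true
        · rw [hb]
          rw [h1]
          have : x ∈ t ∩ u' := h2.mpr ⟨hx, hb⟩
          exact (Finset.mem_inter.mp this).2
        · simp only [Bool.not_eq_true] at hb
          rw [hb]
          rw [Bool.eq_false_iff, Ne, h1]
          intro hxu
          have : x ∈ t ∩ u' := Finset.mem_inter.mpr ⟨hx, hxu⟩
          rw [hb] at h2
          simpa using (h2.mp this).2
      exact Finset.mem_biUnion.mpr ⟨t.card, Finset.mem_range.mpr (by omega),
        Finset.mem_powersetCard.mpr ⟨htS, rfl⟩⟩
    calc 𝒜.shatterer.card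
        ≤ ((Finset.range (d+1)).biUnion (fun i => S.powersetCard i)).card :=
          Finset.card_le_card hsub
      _ ≤ ∑ i ∈ Finset.range (d+1), (S.powersetCard i).card := Finset.card_biUnion_le
      _ = ∑ i ∈ Finset.range (d+1), S.card.choose i := by
          simp [Finset.card_powersetCard]
      _ ≤ (S.card+1)^d := sum_choose_le _ _
  -- choice of classifiers for each subset
  have hft : ∀ T : Finset X, T ⊆ S → ∃ hs : Fin k → X → Bool, (∀ j, hs j ∈ H) ∧
      (∀ x ∈ T, decode (ovaCode k) (fun j => hs j x) = f x) ∧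
      (∀ x ∈ S, x ∉ T → decode (ovaCode k) (fun j => hs j x) ≠ f x) := by
    intro T hT
    obtain ⟨g, hgmem, hg1, hg2⟩ := hf ↑T (by exact_mod_cast Finset.coe_subset.mpr hT)
    obtain ⟨hs, hmem, rfl⟩ := hgmem
    exact ⟨hs, hmem, fun x hx => hg1 x hx, fun x hxS hxT => hg2 x ⟨hxS, hxT⟩⟩
  choose! hs hmem hagree hdiff using hft
  set φ : Finset X → (Fin k → Finset X) :=
    fun T => fun j => S.filter (fun x => hs T j x = true) with hφ
  have hmapsto : ∀ T ∈ S.powerset, φ T ∈ Fintype.piFinset (fun _ : Fin k => 𝒜) := by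
    intro T hT
    rw [Fintype.mem_piFinset]
    intro j
    rw [h𝒜, Finset.mem_filter]
    refine ⟨Finset.mem_powerset.mpr (Finset.filter_subset _ _),
      hs T j, hmem T (Finset.mem_powerset.mp hT) j, fun x hx => ?_⟩
    simp [hφ, hx]
  have hinj : Set.InjOn φ ↑S.powerset := by
    intro T1 hT1 T2 hT2 heq
    have hsub1 : T1 ⊆ S := Finset.mem_powerset.mp (by exact_mod_cast hT1)
    have hsub2 : T2 ⊆ S := Finset.mem_powerset.mp (by exact_mod_cast hT2)
    have hpt : ∀ x ∈ S, ∀ j, hs T1 j x = hs T2 j x := by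
      intro x hx j
      have hEj : φ T1 j = φ T2 j := congrFun heq j
      have hiff : (hs T1 j x = true) ↔ (hs T2 j x = true) := by
        constructor <;> intro h
        · have hmem1 : x ∈ φ T1 j := Finset.mem_filter.mpr ⟨hx, h⟩
          rw [hEj] at hmem1
          exact (Finset.mem_filter.mp hmem1).2
        · have hmem2 : x ∈ φ T2 j := Finset.mem_filter.mpr ⟨hx, h⟩
          rw [← hEj] at hmem2
          exact (Finset.mem_filter.mp hmem2).2
      cases h1 : hs T1 j x <;> cases h2 : hs T2 j x <;> simp_all
    have hdec : ∀ x ∈ S, decode (ovaCode k) (fun j => hs T1 j x)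
        = decode (ovaCode k) (fun j => hs T2 j x) := by
      intro x hx
      have : (fun j => hs T1 j x) = (fun j => hs T2 j x) := funext (fun j => hpt x hx j)
      rw [this]
    ext x
    constructor
    · intro hxT1
      by_contra hxT2
      have hxS : x ∈ S := hsub1 hxT1
      exact hdiff T2 hsub2 x hxS hxT2
        (by rw [← hdec x hxS]; exact hagree T1 hsub1 x hxT1)
    · intro hxT2
      by_contra hxT1
      have hxS : x ∈ S := hsub2 hxT2
      exact hdiff T1 hsub1 x hxS hxT1
        (by rw [hdec x hxS]; exact hagree T2 hsub2 x hxT2)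
  calc 2^S.card = S.powerset.card := (Finset.card_powerset S).symm
    _ ≤ (Fintype.piFinset fun _ : Fin k => 𝒜).card :=
        Finset.card_le_card_of_injOn φ hmapsto hinj
    _ = 𝒜.card ^ k := by
        rw [Fintype.card_piFinset]
        simp
    _ ≤ ((S.card+1)^d)^k := Nat.pow_le_pow_left hAcard k


lemma part1 (d k : ℕ) [NeZero k] (hd : 2 ≤ d) (hk : 2 ≤ k) :
    ∃ S : Finset (Fin d → ℝ), NShatters (ecocClass (halfspace d) (ovaCode k)) ↑S ∧
      d * (k - 1) ≤ S.card := by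
  classical
  set pmap : Fin d × Fin (k-1) → (Fin d → ℝ) := fun p => ptc d p.1 p.2.val with hpmap
  have hinj : Function.Injective pmap := by
    intro p q hpq
    obtain ⟨h1, h2⟩ := ptc_inj d hd hpq
    exact Prod.ext h1 (Fin.ext h2)
  refine ⟨Finset.image pmap Finset.univ, ?_, ?_⟩
  swap
  · rw [Finset.card_image_of_injective _ hinj]
    simp
  set f₁ : (Fin d → ℝ) → Fin k := fun x =>
    if h : ∃ p : Fin d × Fin (k-1), pmap p = x
    then ⟨h.choose.2.val + 1, by have := h.choose.2.isLt; omega⟩ else 0 with hf₁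
  have hf₁eval : ∀ p : Fin d × Fin (k-1),
      f₁ (pmap p) = ⟨p.2.val + 1, by have := p.2.isLt; omega⟩ := by
    intro p
    have hex : ∃ q : Fin d × Fin (k-1), pmap q = pmap p := ⟨p, rfl⟩
    simp only [hf₁]
    rw [dif_pos hex]
    exact Fin.ext (by simp [hinj hex.choose_spec])
  refine ⟨f₁, fun _ => 0, ?_, ?_⟩
  · intro x hx
    rw [Finset.coe_image, Finset.coe_univ, Set.image_univ] at hx
    obtain ⟨p, rfl⟩ := hx
    rw [hf₁eval p]
    simp [Fin.ext_iff]
  · intro T hT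
    set sg : ℕ → ℕ → ℝ := fun c n =>
      if hn : n < d then (if ptc d ⟨n, hn⟩ c ∈ T then 1 else -1) else -1 with hsg
    have hsg_pm : ∀ c n, -1 ≤ sg c n ∧ sg c n ≤ 1 := by
      intro c n; simp only [hsg]; split_ifs <;> norm_num
    set W : Fin k → Fin (d+1) → ℝ := fun b =>
      if b.val = 0 then (fun j => if j.val = d then -1 else 0)
      else wts d (b.val - 1) (sg (b.val - 1)) with hW
    set hfun : Fin k → (Fin d → ℝ) → Bool :=
      fun b x => decide (0 ≤ ∑ i, W b i * aug x i) with hhfun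
    have hzero : ∀ x, hfun 0 x = false := by
      intro x
      have hW0 : W 0 = fun j : Fin (d+1) => if (j:ℕ) = d then (-1:ℝ) else 0 := by
        simp only [hW]
        simp
      have hv : ∑ i : Fin (d+1), W 0 i * aug x i = -1 := by
        rw [hW0]
        rw [Finset.sum_eq_single_of_mem (Fin.last d) (Finset.mem_univ _)
          (fun b _ hb => by
            have hbd : ¬ ((b:ℕ) = d) := fun hh => hb (Fin.ext (by rw [hh, Fin.val_last]))
            simp [hbd])]
        simp [aug, Fin.val_last]
      simp only [hhfun, hv]
      norm_num
    have hon : ∀ (i : Fin d) (c : Fin (k-1)) (b : Fin k), b.val = c.val + 1 →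
        hfun b (pmap (i, c)) = decide (pmap (i,c) ∈ T) := by
      intro i c b hb
      have hbne : ¬ b.val = 0 := by omega
      have hWb : W b = wts d c.val (sg c.val) := by
        simp only [hW]
        rw [if_neg hbne, hb]
        norm_num
      have hval := wts_value_on d hd i c.val (sg c.val)
      have hsgval : sg c.val i.val = if pmap (i,c) ∈ T then 1 else -1 := by
        simp only [hsg]
        rw [dif_pos i.isLt]
      simp only [hhfun, hWb, hpmap]
      rw [hval, hsgval]
      by_cases hmem : pmap (i,c) ∈ T
      · simp only [hpmap] at hmem
        simp [hpmap, hmem]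
      · simp only [hpmap] at hmem
        simp [hpmap, hmem]
    have hoff : ∀ (i : Fin d) (c : Fin (k-1)) (b : Fin k), ¬ b.val = 0 →
        ¬ b.val = c.val + 1 → hfun b (pmap (i, c)) = false := by
      intro i c b hb0 hbc
      have hWb : W b = wts d (b.val - 1) (sg (b.val - 1)) := by
        simp only [hW]
        rw [if_neg hb0]
      have hval := wts_value_off d hd i (b.val - 1) c.val (by omega) (sg (b.val-1))
        (hsg_pm _)
      simp only [hhfun, hWb, hpmap]
      exact decide_eq_false (not_le.mpr hval)
    refine ⟨fun x => decode (ovaCode k) (fun j => hfun j x),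
      ⟨hfun, fun j => ⟨W j, rfl⟩, rfl⟩, ?_, ?_⟩
    · intro x hx
      have hxS : x ∈ (↑(Finset.image pmap Finset.univ) : Set (Fin d → ℝ)) := hT hx
      rw [Finset.coe_image, Finset.coe_univ, Set.image_univ] at hxS
      obtain ⟨p, rfl⟩ := hxS
      rcases p with ⟨i, c⟩
      rw [hf₁eval ⟨i, c⟩]
      apply decode_ova_eq
      · have := hon i c ⟨c.val + 1, by have := c.isLt; omega⟩ rfl
        rw [this]
        simp [hx]
      · intro b hblt
        have hbv : b.val < c.val + 1 := hblt
        by_cases hb0 : b.val = 0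
        · have hb : b = 0 := Fin.ext (by simpa using hb0)
          rw [hb]
          exact hzero _
        · exact hoff i c b hb0 (by omega)
    · intro x hx
      obtain ⟨hxS, hxT⟩ := hx
      rw [Finset.coe_image, Finset.coe_univ, Set.image_univ] at hxS
      obtain ⟨p, rfl⟩ := hxS
      rcases p with ⟨i, c⟩
      apply decode_ova_zero
      intro b
      by_cases hb0 : b.val = 0
      · have hb : b = 0 := Fin.ext (by simpa using hb0)
        rw [hb]
        exact hzero _
      · by_cases hbc : b.val = c.val + 1
        · rw [hon i c b hbc]
          simp [hxT]
        · exact hoff i c b hb0 hbc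

/-- For all integers d, k ≥ 2: d_N(W^d_OvA) ≥ d·(k−1); moreover there is a
universal constant C > 0 such that for every binary class H of VC dimension at most d,
d_G(H_OvA) ≤ C·d·k·log(d·k). -/
theorem stmt6 : ∃ C : ℝ, 0 < C ∧ ∀ (d k : ℕ) [NeZero k], 2 ≤ d → 2 ≤ k →
    (∃ S : Finset (Fin d → ℝ), NShatters (ecocClass (halfspace d) (ovaCode k)) ↑S ∧
      d * (k - 1) ≤ S.card) ∧
    (∀ (X : Type*) (H : Set (X → Bool)), VCDimLE H d →
      ∀ S : Finset X, GShatters (ecocClass H (ovaCode k)) ↑S →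
        (S.card : ℝ) ≤ C * d * k * Real.log (d * k)) := by
  refine ⟨10, by norm_num, ?_⟩
  intro d k _ hd hk
  constructor
  · exact part1 d k hd hk
  · intro X H hvc S hG
    have hcount := gshatter_count H d k hvc S hG
    have hdk4 : 4 ≤ d * k := le_trans (by norm_num) (Nat.mul_le_mul hd hk)
    have hnat : 2 ^ S.card ≤ (S.card + 1) ^ (d * k) := by
      rw [pow_mul]; exact hcount
    have hreal : (2:ℝ) ^ S.card ≤ ((S.card:ℝ) + 1) ^ (d * k) := by exact_mod_cast hnat
    have hlog : (S.card:ℝ) * Real.log 2 ≤ ((d*k : ℕ):ℝ) * Real.log ((S.card:ℝ) + 1) := by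
      have h2 := Real.log_le_log (by positivity) hreal
      rw [Real.log_pow, Real.log_pow] at h2
      exact_mod_cast h2
    have hfin := log_rec_bound S.card (d*k) hdk4 (by exact_mod_cast hlog)
    calc (S.card:ℝ) ≤ 10 * ((d*k:ℕ):ℝ) * Real.log ((d*k:ℕ):ℝ) := hfin
      _ = 10 * d * k * Real.log (d * k) := by push_cast; ring
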